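/- Let d ≥ 1 and λ > 0, and let n > m ≥ 0 be integers. Suppose P is either a harmonic polynomial homogeneous of degree n, or P = (1−‖x‖²)Q where Q has degree n−2 and ⟨Q, h⟩_Δ = 0 for all polynomials h of degree ≤ n−3; and suppose g is either a harmonic polynomial homogeneous of degree m, or g = (1−‖x‖²)h where h has degree m−2 and ⟨h, u⟩_Δ = 0 for all polynomials u of degree ≤ m−3. Then ⟨P, g⟩_{−2} = 0. Moreover, for Y a harmonic polynomial homogeneous of degree n and Q of degree n−2 with ⟨Q, h⟩_Δ = 0 for all h of degree ≤ n−3, one has ⟨Y, (1−‖x‖²)Q⟩_{−2} = 0. -/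

import Mathlib

open MvPolynomial MeasureTheory

/-- The Laplacian `Δ = ∑ ∂²/∂xᵢ²` acting on polynomials in `d` variables. -/
noncomputable def lap {d : ℕ} (P : MvPolynomial (Fin d) ℝ) : MvPolynomial (Fin d) ℝ :=
  ∑ i, pderiv i (pderiv i P)

/-- The polynomial `‖x‖² = x₁² + ⋯ + x_d²`. -/
noncomputable def normSq (d : ℕ) : MvPolynomial (Fin d) ℝ := ∑ i, X i ^ 2

/-- Evaluation of a polynomial at a point of Euclidean space. -/
noncomputable def evalP {d : ℕ} (f : MvPolynomial (Fin d) ℝ)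
    (x : EuclideanSpace ℝ (Fin d)) : ℝ :=
  MvPolynomial.eval (fun i => x i) f

/-- The closed unit ball `B^d ⊆ ℝ^d`. -/
noncomputable def ballD (d : ℕ) : Set (EuclideanSpace ℝ (Fin d)) :=
  Metric.closedBall 0 1

/-- The surface measure `dω` on the unit sphere `S^{d−1}`. -/
noncomputable def sphereMeas (d : ℕ) :
    Measure (Metric.sphere (0 : EuclideanSpace ℝ (Fin d)) 1) :=
  (volume : Measure (EuclideanSpace ℝ (Fin d))).toSphere

/-- The total surface area `ω_d = ∫_{S^{d−1}} dω`. -/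
noncomputable def omegaD (d : ℕ) : ℝ := (sphereMeas d Set.univ).toReal

/-- The volume of the unit ball `B^d`. -/
noncomputable def volB (d : ℕ) : ℝ := (volume (ballD d)).toReal

/-- The inner product
`⟨f,g⟩_{−2} = (λ/ω_d) ∫_{B^d} Δf Δg dx + (1/ω_d) ∫_{S^{d−1}} f g dω`. -/
noncomputable def innerNeg2 (d : ℕ) (lam : ℝ) (f g : MvPolynomial (Fin d) ℝ) : ℝ :=
  (lam / omegaD d) * ∫ x in ballD d, evalP (lap f) x * evalP (lap g) x +
    (1 / omegaD d) * ∫ y : Metric.sphere (0 : EuclideanSpace ℝ (Fin d)) 1,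
      evalP f y * evalP g y ∂(sphereMeas d)

/-- The inner product
`⟨f,g⟩_Δ = a_d ∫_{B^d} Δ[(1−‖x‖²)f] Δ[(1−‖x‖²)g] dx`, `a_d = 1/(4d² vol(B^d))`. -/
noncomputable def innerDelta (d : ℕ) (f g : MvPolynomial (Fin d) ℝ) : ℝ :=
  (1 / (4 * (d : ℝ) ^ 2 * volB d)) *
    ∫ x in ballD d,
      evalP (lap ((1 - normSq d) * f)) x * evalP (lap ((1 - normSq d) * g)) x


section Aux
open Real

noncomputable def m1 (k : ℕ) : ℝ := ∫ t : ℝ, t ^ k * Real.exp (-t ^ 2)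

lemma integrable_pow_exp (k : ℕ) : Integrable fun t : ℝ => t ^ k * Real.exp (-t ^ 2) := by
  have := integrable_rpow_mul_exp_neg_mul_sq (b := 1) one_pos
    (s := (k : ℝ)) (lt_of_lt_of_le (by norm_num) (Nat.cast_nonneg k))
  simpa [Real.rpow_natCast] using this

lemma m1_rec (k : ℕ) : m1 (k + 1) = (k : ℝ) / 2 * m1 (k - 1) := by
  have hu : ∀ x : ℝ, HasDerivAt (fun t : ℝ => t ^ k) ((k : ℝ) * x ^ (k - 1)) x :=
    fun x => hasDerivAt_pow k x
  have hv : ∀ x : ℝ, HasDerivAt (fun t : ℝ => -(1/2) * Real.exp (-t ^ 2))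
      (x * Real.exp (-x ^ 2)) x := by
    intro x
    have h1 : HasDerivAt (fun t : ℝ => -t ^ 2) (-(2 * x)) x := by
      simpa using (hasDerivAt_pow 2 x).fun_neg
    have h2 := (h1.exp).const_mul (-(1/2) : ℝ)
    refine h2.congr_deriv ?_
    ring
  have e1 : ((fun t : ℝ => t ^ k) * fun x => x * Real.exp (-x ^ 2))
      = fun t : ℝ => t ^ (k + 1) * Real.exp (-t ^ 2) := by
    funext t; simp only [Pi.mul_apply, pow_succ]; ring
  have e2 : ((fun x : ℝ => (k : ℝ) * x ^ (k - 1)) * fun t : ℝ => -(1/2) * Real.exp (-t ^ 2))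
      = fun t : ℝ => (-(k : ℝ)/2) * (t ^ (k - 1) * Real.exp (-t ^ 2)) := by
    funext t; simp only [Pi.mul_apply]; ring
  have e3 : ((fun t : ℝ => t ^ k) * fun t : ℝ => -(1/2) * Real.exp (-t ^ 2))
      = fun t : ℝ => (-(1:ℝ)/2) * (t ^ k * Real.exp (-t ^ 2)) := by
    funext t; simp only [Pi.mul_apply]; ring
  have hint1 : Integrable ((fun t : ℝ => t ^ k) * fun x => x * Real.exp (-x ^ 2)) := by
    rw [e1]; exact integrable_pow_exp _
  have hint2 : Integrable ((fun x : ℝ => (k : ℝ) * x ^ (k - 1)) *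
      fun t : ℝ => -(1/2) * Real.exp (-t ^ 2)) := by
    rw [e2]; exact (integrable_pow_exp _).const_mul _
  have hint3 : Integrable ((fun t : ℝ => t ^ k) * fun t : ℝ => -(1/2) * Real.exp (-t ^ 2)) := by
    rw [e3]; exact (integrable_pow_exp _).const_mul _
  have H := integral_mul_deriv_eq_deriv_mul_of_integrable (fun x _ => hu x) (fun x _ => hv x) hint1 hint2 hint3
  have L : (∫ x : ℝ, x ^ k * (x * Real.exp (-x ^ 2))) = m1 (k + 1) := by
    unfold m1
    exact integral_congr_ae (Filter.Eventually.of_forall fun t => by simp only [pow_succ]; ring)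
  have R : (∫ x : ℝ, (k : ℝ) * x ^ (k - 1) * (-(1/2) * Real.exp (-x ^ 2)))
      = (-(k : ℝ)/2) * m1 (k - 1) := by
    unfold m1
    rw [← integral_const_mul]
    exact integral_congr_ae (Filter.Eventually.of_forall fun t => by ring)
  rw [L, R] at H
  rw [H]; ring
section GJ

variable {d : ℕ}

noncomputable def gJ {d : ℕ} (p : MvPolynomial (Fin d) ℝ) : ℝ :=
  ∫ v : Fin d → ℝ, MvPolynomial.eval v p * Real.exp (-∑ i, v i ^ 2)

lemma exp_neg_sum_eq (v : Fin d → ℝ) :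
    Real.exp (-∑ i, v i ^ 2) = ∏ i, Real.exp (-v i ^ 2) := by
  rw [← Real.exp_sum]
  congr 1
  rw [← Finset.sum_neg_distrib]

lemma mono_integrand_eq (γ : Fin d →₀ ℕ) (c : ℝ) :
    (fun v : Fin d → ℝ => MvPolynomial.eval v (monomial γ c) * Real.exp (-∑ i, v i ^ 2))
      = fun v => c * ∏ i, (v i ^ γ i * Real.exp (-v i ^ 2)) := by
  funext v
  rw [eval_monomial, Finsupp.prod_pow, exp_neg_sum_eq, Finset.prod_mul_distrib]
  ring

lemma integrable_mono_gauss (γ : Fin d →₀ ℕ) (c : ℝ) :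
    Integrable fun v : Fin d → ℝ =>
      MvPolynomial.eval v (monomial γ c) * Real.exp (-∑ i, v i ^ 2) := by
  rw [mono_integrand_eq]
  exact (Integrable.fintype_prod (f := fun i (t : ℝ) => t ^ γ i * Real.exp (-t ^ 2))
    (fun i => integrable_pow_exp (γ i))).const_mul c

lemma poly_integrand_sum (p : MvPolynomial (Fin d) ℝ) :
    (fun v : Fin d → ℝ => MvPolynomial.eval v p * Real.exp (-∑ i, v i ^ 2))
      = fun v => ∑ γ ∈ p.support,
          MvPolynomial.eval v (monomial γ (coeff γ p)) * Real.exp (-∑ i, v i ^ 2) := by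
  funext v
  rw [← Finset.sum_mul, ← map_sum, support_sum_monomial_coeff]

lemma integrable_poly_gauss (p : MvPolynomial (Fin d) ℝ) :
    Integrable fun v : Fin d → ℝ =>
      MvPolynomial.eval v p * Real.exp (-∑ i, v i ^ 2) := by
  rw [poly_integrand_sum]
  exact integrable_finset_sum _ (fun γ _ => integrable_mono_gauss γ (coeff γ p))

lemma gJ_zero : gJ (0 : MvPolynomial (Fin d) ℝ) = 0 := by
  unfold gJ; simp

lemma gJ_add (p q : MvPolynomial (Fin d) ℝ) : gJ (p + q) = gJ p + gJ q := by
  unfold gJ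
  rw [← integral_add (integrable_poly_gauss p) (integrable_poly_gauss q)]
  exact integral_congr_ae (Filter.Eventually.of_forall fun v => by
    simp only [map_add]; ring)

lemma gJ_sum {ι : Type*} (s : Finset ι) (f : ι → MvPolynomial (Fin d) ℝ) :
    gJ (∑ i ∈ s, f i) = ∑ i ∈ s, gJ (f i) := by
  classical
  induction s using Finset.induction_on with
  | empty => simpa using gJ_zero
  | insert _ _ h ih => rw [Finset.sum_insert h, Finset.sum_insert h, gJ_add, ih]

lemma gJ_C_mul (c : ℝ) (p : MvPolynomial (Fin d) ℝ) : gJ (C c * p) = c * gJ p := by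
  unfold gJ
  rw [← integral_const_mul]
  exact integral_congr_ae (Filter.Eventually.of_forall fun v => by
    simp only [map_mul, eval_C]; ring)

lemma gJ_monomial (γ : Fin d →₀ ℕ) (c : ℝ) :
    gJ (monomial γ c) = c * ∏ i, m1 (γ i) := by
  unfold gJ
  rw [mono_integrand_eq, integral_const_mul,
    integral_fintype_prod_volume_eq_prod (f := fun i (t : ℝ) => t ^ γ i * Real.exp (-t ^ 2))]
  rfl

end GJ
section Alg

variable {d : ℕ}

lemma degree_eq_sum_univ (γ : Fin d →₀ ℕ) : γ.degree = ∑ i, γ i :=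
  Finset.sum_subset (Finset.subset_univ _) (fun x _ hx => Finsupp.notMem_support_iff.mp hx)

lemma gJ_X_mul (i : Fin d) (p : MvPolynomial (Fin d) ℝ) :
    gJ (X i * p) = 1 / 2 * gJ (pderiv i p) := by
  conv_lhs => rw [← support_sum_monomial_coeff p]
  conv_rhs => rw [← support_sum_monomial_coeff p]
  rw [Finset.mul_sum, map_sum, gJ_sum, gJ_sum, Finset.mul_sum]
  refine Finset.sum_congr rfl fun γ _ => ?_
  set c := coeff γ p with hc
  have hX : (X i : MvPolynomial (Fin d) ℝ) * monomial γ c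
      = monomial (Finsupp.single i 1 + γ) c := by
    rw [X, monomial_mul, one_mul]
  rw [hX, pderiv_monomial, gJ_monomial, gJ_monomial]
  have split : ∀ σ : Fin d →₀ ℕ,
      (∏ j, m1 (σ j)) = m1 (σ i) * ∏ j ∈ Finset.univ.erase i, m1 (σ j) :=
    fun σ => (Finset.mul_prod_erase Finset.univ (fun j => m1 (σ j)) (Finset.mem_univ i)).symm
  rw [split (Finsupp.single i 1 + γ), split (γ - Finsupp.single i 1)]
  have e1 : (Finsupp.single i 1 + γ : Fin d →₀ ℕ) i = γ i + 1 := by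
    rw [Finsupp.add_apply, Finsupp.single_eq_same, add_comm]
  have e2 : (γ - Finsupp.single i 1 : Fin d →₀ ℕ) i = γ i - 1 := by
    rw [Finsupp.tsub_apply, Finsupp.single_eq_same]
  have e3 : (∏ j ∈ Finset.univ.erase i, m1 ((Finsupp.single i 1 + γ : Fin d →₀ ℕ) j))
      = ∏ j ∈ Finset.univ.erase i, m1 (γ j) := by
    refine Finset.prod_congr rfl fun j hj => ?_
    rw [Finsupp.add_apply, Finsupp.single_eq_of_ne' (Finset.mem_erase.mp hj).1.symm, zero_add]
  have e4 : (∏ j ∈ Finset.univ.erase i, m1 ((γ - Finsupp.single i 1 : Fin d →₀ ℕ) j))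
      = ∏ j ∈ Finset.univ.erase i, m1 (γ j) := by
    refine Finset.prod_congr rfl fun j hj => ?_
    rw [Finsupp.tsub_apply, Finsupp.single_eq_of_ne' (Finset.mem_erase.mp hj).1.symm,
      Nat.sub_zero]
  rw [e1, e2, e3, e4, m1_rec (γ i)]
  ring

lemma euler {k : ℕ} {p : MvPolynomial (Fin d) ℝ} (hp : p.IsHomogeneous k) :
    (∑ i, (X i : MvPolynomial (Fin d) ℝ) * pderiv i p) = C (k : ℝ) * p := by
  conv_lhs => rw [← support_sum_monomial_coeff p]
  conv_rhs => rw [← support_sum_monomial_coeff p]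
  rw [Finset.mul_sum]
  have hs : ∀ i : Fin d, (X i : MvPolynomial (Fin d) ℝ) *
      pderiv i (∑ γ ∈ p.support, monomial γ (coeff γ p))
      = ∑ γ ∈ p.support, (X i * pderiv i (monomial γ (coeff γ p))) := by
    intro i; rw [map_sum, Finset.mul_sum]
  rw [Finset.sum_congr rfl (fun i _ => hs i), Finset.sum_comm]
  refine Finset.sum_congr rfl fun γ hγ => ?_
  have hdeg : γ.degree = k := by
    by_contra h
    exact (MvPolynomial.mem_support_iff.mp hγ) (hp.coeff_eq_zero h)
  set c := coeff γ p with hc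
  have hterm : ∀ i : Fin d, (X i : MvPolynomial (Fin d) ℝ) * pderiv i (monomial γ c)
      = monomial γ (c * γ i) := by
    intro i
    rw [pderiv_monomial, X, monomial_mul, one_mul]
    by_cases h : γ i = 0
    · simp [h]
    · have hfe : Finsupp.single i 1 + (γ - Finsupp.single i 1) = γ := by
        ext j
        rcases eq_or_ne j i with rfl | hj
        · simp only [Finsupp.add_apply, Finsupp.tsub_apply, Finsupp.single_eq_same]
          omega
        · simp only [Finsupp.add_apply, Finsupp.tsub_apply,
            Finsupp.single_eq_of_ne' (Ne.symm hj)]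
          omega
      rw [hfe]
  rw [Finset.sum_congr rfl (fun i _ => hterm i), C_mul_monomial, ← map_sum (monomial γ)]
  congr 1
  rw [← Finset.mul_sum]
  have : (∑ i, ((γ i : ℝ))) = (k : ℝ) := by
    rw [← Nat.cast_sum, ← degree_eq_sum_univ, hdeg]
  rw [this]; ring

lemma keyL {m : ℕ} {g : MvPolynomial (Fin d) ℝ} (hg : g.IsHomogeneous m)
    (hlap : (∑ i, pderiv i (pderiv i g)) = 0) (p : MvPolynomial (Fin d) ℝ) :
    (m : ℝ) * gJ (p * g) = 1 / 2 * ∑ i, gJ (pderiv i p * pderiv i g) := by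
  have h1 : C (m : ℝ) * (p * g) = ∑ i, (X i : MvPolynomial (Fin d) ℝ) * (p * pderiv i g) := by
    calc C (m : ℝ) * (p * g)
        = p * (∑ i, (X i : MvPolynomial (Fin d) ℝ) * pderiv i g) := by rw [euler hg]; ring
      _ = ∑ i, (X i : MvPolynomial (Fin d) ℝ) * (p * pderiv i g) := by
          rw [Finset.mul_sum]; exact Finset.sum_congr rfl fun i _ => by ring
  have h2 := congrArg gJ h1
  rw [gJ_C_mul, gJ_sum] at h2
  rw [Finset.sum_congr rfl (fun i (_ : i ∈ Finset.univ) => gJ_X_mul i (p * pderiv i g))] at h2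
  have h4 : ∀ i : Fin d, gJ (pderiv i (p * pderiv i g))
      = gJ (pderiv i p * pderiv i g) + gJ (p * pderiv i (pderiv i g)) := by
    intro i
    rw [pderiv_mul, gJ_add]
  rw [Finset.sum_congr rfl (fun i _ => by rw [h4 i])] at h2
  have h5 : (∑ i, gJ (p * pderiv i (pderiv i g))) = 0 := by
    rw [← gJ_sum, ← Finset.mul_sum, hlap, mul_zero, gJ_zero]
  rw [h2, Finset.sum_congr rfl (fun i (_ : i ∈ Finset.univ) =>
    mul_add (1/2 : ℝ) (gJ (pderiv i p * pderiv i g)) (gJ (p * pderiv i (pderiv i g)))),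
    Finset.sum_add_distrib, ← Finset.mul_sum, ← Finset.mul_sum, h5]
  ring

lemma gaussOrth {n m : ℕ} {f g : MvPolynomial (Fin d) ℝ} (hf : f.IsHomogeneous n)
    (hg : g.IsHomogeneous m) (hlf : (∑ i, pderiv i (pderiv i f)) = 0)
    (hlg : (∑ i, pderiv i (pderiv i g)) = 0) (hnm : n ≠ m) :
    gJ (f * g) = 0 := by
  have h1 := keyL hg hlg f
  have h2 := keyL hf hlf g
  rw [mul_comm g f] at h2
  rw [Finset.sum_congr rfl (fun i (_ : i ∈ Finset.univ) =>
    congrArg gJ (mul_comm (pderiv i g) (pderiv i f)))] at h2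
  have h4 : ((m : ℝ) - n) * gJ (f * g) = 0 := by
    rw [sub_mul, h1, h2]; ring
  have h5 : ((m : ℝ) - n) ≠ 0 := sub_ne_zero.2 (by exact_mod_cast hnm.symm)
  exact (mul_eq_zero.mp h4).resolve_left h5

end Alg
section Euclid

variable {d : ℕ}

lemma norm_sq_eq_sum (x : EuclideanSpace ℝ (Fin d)) : ‖x‖ ^ 2 = ∑ i, x i ^ 2 := by
  rw [EuclideanSpace.norm_eq, Real.sq_sqrt (Finset.sum_nonneg fun i _ => sq_nonneg _)]
  exact Finset.sum_congr rfl fun i _ => by rw [Real.norm_eq_abs, sq_abs]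

lemma euclid_integrand_comp (p : MvPolynomial (Fin d) ℝ) (v : Fin d → ℝ) :
    evalP p ((MeasurableEquiv.toLp 2 (Fin d → ℝ)) v) *
      Real.exp (-‖(MeasurableEquiv.toLp 2 (Fin d → ℝ)) v‖ ^ 2)
      = MvPolynomial.eval v p * Real.exp (-∑ i, v i ^ 2) := by
  have h1 : ∀ i, ((MeasurableEquiv.toLp 2 (Fin d → ℝ)) v) i = v i := fun _ => rfl
  have h2 : evalP p ((MeasurableEquiv.toLp 2 (Fin d → ℝ)) v)
      = MvPolynomial.eval v p := by
    unfold evalP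
    congr 1
  have h3 : ‖(MeasurableEquiv.toLp 2 (Fin d → ℝ)) v‖ ^ 2 = ∑ i, v i ^ 2 := by
    rw [norm_sq_eq_sum]
    exact Finset.sum_congr rfl fun i _ => by rw [h1]
  rw [h2, h3]

lemma gI_eq_gJ (p : MvPolynomial (Fin d) ℝ) :
    (∫ x : EuclideanSpace ℝ (Fin d), evalP p x * Real.exp (-‖x‖ ^ 2)) = gJ p := by
  have hm := (EuclideanSpace.volume_preserving_symm_measurableEquiv_toLp (Fin d)).symm
  rw [← hm.integral_comp (MeasurableEquiv.measurableEmbedding _)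
    (fun x : EuclideanSpace ℝ (Fin d) => evalP p x * Real.exp (-‖x‖ ^ 2))]
  exact integral_congr_ae (Filter.Eventually.of_forall fun v => euclid_integrand_comp p v)

lemma integrable_gI (p : MvPolynomial (Fin d) ℝ) :
    Integrable (fun x : EuclideanSpace ℝ (Fin d) => evalP p x * Real.exp (-‖x‖ ^ 2)) := by
  have hm := (EuclideanSpace.volume_preserving_symm_measurableEquiv_toLp (Fin d)).symm
  rw [← hm.integrable_comp_emb (MeasurableEquiv.measurableEmbedding _), MeasurableEquiv.symm_symm]
  have : ((fun x : EuclideanSpace ℝ (Fin d) => evalP p x * Real.exp (-‖x‖ ^ 2)) ∘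
      (MeasurableEquiv.toLp 2 (Fin d → ℝ)))
      = fun v : Fin d → ℝ => MvPolynomial.eval v p * Real.exp (-∑ i, v i ^ 2) :=
    funext fun v => euclid_integrand_comp p v
  rw [this]
  exact integrable_poly_gauss p

lemma eval_homog_smul {k : ℕ} {u : MvPolynomial (Fin d) ℝ} (hu : u.IsHomogeneous k)
    (r : ℝ) (x : Fin d → ℝ) :
    MvPolynomial.eval (fun i => r * x i) u = r ^ k * MvPolynomial.eval x u := by
  rw [eval_eq', eval_eq', Finset.mul_sum]
  refine Finset.sum_congr rfl fun γ hγ => ?_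
  have hdeg : γ.degree = k := by
    by_contra h
    exact (MvPolynomial.mem_support_iff.mp hγ) (hu.coeff_eq_zero h)
  have h2 : (∏ i, (r * x i) ^ γ i) = r ^ k * ∏ i, x i ^ γ i := by
    simp_rw [mul_pow]
    rw [Finset.prod_mul_distrib, Finset.prod_pow_eq_pow_sum, ← degree_eq_sum_univ, hdeg]
  rw [h2]
  ring

lemma evalP_homog_smul {k : ℕ} {u : MvPolynomial (Fin d) ℝ} (hu : u.IsHomogeneous k)
    (r : ℝ) (y : EuclideanSpace ℝ (Fin d)) :
    evalP u (r • y) = r ^ k * evalP u y := by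
  unfold evalP
  rw [show (fun i => (r • y) i) = fun i => r * y i from funext fun i => rfl]
  exact eval_homog_smul hu r (fun i => y i)

end Euclid
section Polar

variable {d : ℕ}

lemma sphere_int_eq (hd : 1 ≤ d) {k : ℕ} (u : MvPolynomial (Fin d) ℝ)
    (hu : u.IsHomogeneous k) :
    ∃ c : ℝ, 0 < c ∧
      (∫ x : EuclideanSpace ℝ (Fin d), evalP u x * Real.exp (-‖x‖ ^ 2))
        = c * ∫ y : Metric.sphere (0 : EuclideanSpace ℝ (Fin d)) 1,
            evalP u y ∂(sphereMeas d) := by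
  haveI : Nontrivial (EuclideanSpace ℝ (Fin d)) := by
    apply Module.nontrivial_of_finrank_pos (R := ℝ)
    rw [finrank_euclideanSpace_fin]
    omega
  set E := EuclideanSpace ℝ (Fin d) with hE
  set n : ℕ := Module.finrank ℝ E - 1 with hn
  set c : ℝ := ∫ r : Set.Ioi (0 : ℝ), ((r : ℝ) ^ k * Real.exp (-(r : ℝ) ^ 2))
      ∂(Measure.volumeIoiPow n) with hc
  have hF : (∫ x : E, evalP u x * Real.exp (-‖x‖ ^ 2))
      = (∫ y : Metric.sphere (0 : E) 1, evalP u y ∂(sphereMeas d)) * c := by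
    set F : E → ℝ := fun x => evalP u x * Real.exp (-‖x‖ ^ 2) with hFdef
    set g : Metric.sphere (0 : E) 1 × Set.Ioi (0 : ℝ) → ℝ :=
      fun z => (fun y : Metric.sphere (0 : E) 1 => evalP u y) z.1 *
        (fun r : Set.Ioi (0 : ℝ) => (r : ℝ) ^ k * Real.exp (-(r : ℝ) ^ 2)) z.2 with hgdef
    have step1 : (∫ x : E, F x) = ∫ x : ({0}ᶜ : Set E), F x.1
        ∂((volume : Measure E).comap Subtype.val) := by
      rw [integral_subtype_comap (measurableSet_singleton (0 : E)).compl F,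
        restrict_compl_singleton]
    have hcomp : ∀ x : ({0}ᶜ : Set E), F x.1 = g (homeomorphUnitSphereProd E x) := by
      intro x
      have hx0 : (x : E) ≠ 0 := x.2
      have hnorm : ‖(x : E)‖ ≠ 0 := norm_ne_zero_iff.2 hx0
      simp only [hgdef, homeomorphUnitSphereProd_apply_fst_coe,
        homeomorphUnitSphereProd_apply_snd_coe]
      have h1 : (‖(x : E)‖ : ℝ) • (‖(x : E)‖⁻¹ • (x : E)) = (x : E) :=
        smul_inv_smul₀ hnorm _
      have h3 : evalP u (x : E) = ‖(x : E)‖ ^ k * evalP u (‖(x : E)‖⁻¹ • (x : E)) := by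
        rw [← h1, evalP_homog_smul hu]
        rw [h1]
      rw [hFdef]
      dsimp only
      rw [h3]
      ring
    have step2 : (∫ x : ({0}ᶜ : Set E), F x.1 ∂((volume : Measure E).comap Subtype.val))
        = ∫ z, g z ∂((volume : Measure E).toSphere.prod (Measure.volumeIoiPow n)) := by
      rw [show (fun x : ({0}ᶜ : Set E) => F x.1)
          = fun x => g (homeomorphUnitSphereProd E x) from funext hcomp]
      exact (volume : Measure E).measurePreserving_homeomorphUnitSphereProd.integral_comp
        (Homeomorph.measurableEmbedding _) g
    rw [step1, step2, hgdef]
    rw [integral_prod_mul (μ := (volume : Measure E).toSphere)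
      (ν := Measure.volumeIoiPow n)
      (fun y : Metric.sphere (0 : E) 1 => evalP u y)
      (fun r : Set.Ioi (0 : ℝ) => (r : ℝ) ^ k * Real.exp (-(r : ℝ) ^ 2))]
    rfl
  have hcpos : 0 < c := by
    have hceq : c = ∫ y in Set.Ioi (0 : ℝ), y ^ n * (y ^ k * Real.exp (-y ^ 2)) := by
      rw [hc]
      simp only [Measure.volumeIoiPow, ENNReal.ofReal]
      rw [integral_withDensity_eq_integral_smul
        ((measurable_subtype_coe.pow_const _).real_toNNReal),
        integral_subtype_comap measurableSet_Ioi
          (fun y : ℝ => (y ^ n).toNNReal • (y ^ k * Real.exp (-y ^ 2)))]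
      refine setIntegral_congr_fun measurableSet_Ioi fun y hy => ?_
      rw [NNReal.smul_def, Real.coe_toNNReal _ (pow_nonneg (le_of_lt hy) _), smul_eq_mul]
    have hcle : c = ∫ y in Set.Ioi (0 : ℝ), y ^ (n + k) * Real.exp (-y ^ 2) := by
      rw [hceq]
      exact setIntegral_congr_fun measurableSet_Ioi fun y _ => by rw [pow_add]; ring
    rw [hcle]
    have hint : IntegrableOn (fun y : ℝ => y ^ (n + k) * Real.exp (-y ^ 2))
        (Set.Ioi (0 : ℝ)) := by
      have := integrableOn_rpow_mul_exp_neg_mul_sq (b := 1) one_pos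
        (s := ((n + k : ℕ) : ℝ)) (lt_of_lt_of_le (by norm_num) (Nat.cast_nonneg _))
      simpa only [Real.rpow_natCast, neg_mul, one_mul] using this
    rw [setIntegral_pos_iff_support_of_nonneg_ae ?_ hint]
    · have hsub : Set.Ioi (0 : ℝ) ⊆
          Function.support fun y : ℝ => y ^ (n + k) * Real.exp (-y ^ 2) := by
        intro y hy
        exact ne_of_gt (mul_pos (pow_pos hy _) (Real.exp_pos _))
      rw [Set.inter_eq_right.mpr hsub]
      simp [Real.volume_Ioi]
    · refine (ae_restrict_iff' measurableSet_Ioi).2 (Filter.Eventually.of_forall ?_)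
      intro y hy
      exact mul_nonneg (pow_nonneg (le_of_lt hy) _) (Real.exp_pos _).le
  exact ⟨c, hcpos, by rw [hF]; ring⟩

end Polar
section Assemble

variable {d : ℕ}

lemma evalP_mul (f g : MvPolynomial (Fin d) ℝ) (x : EuclideanSpace ℝ (Fin d)) :
    evalP (f * g) x = evalP f x * evalP g x := by
  unfold evalP; rw [map_mul]

lemma sphere_orth (hd : 1 ≤ d) {n m : ℕ} {f g : MvPolynomial (Fin d) ℝ}
    (hf : f.IsHomogeneous n) (hg : g.IsHomogeneous m)
    (hlf : lap f = 0) (hlg : lap g = 0) (hnm : n ≠ m) :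
    (∫ y : Metric.sphere (0 : EuclideanSpace ℝ (Fin d)) 1,
      evalP f y * evalP g y ∂(sphereMeas d)) = 0 := by
  obtain ⟨c, hc, heq⟩ := sphere_int_eq hd (f * g) (hf.mul hg)
  have h0 : (∫ x : EuclideanSpace ℝ (Fin d), evalP (f * g) x * Real.exp (-‖x‖ ^ 2)) = 0 := by
    rw [gI_eq_gJ]
    exact gaussOrth hf hg hlf hlg hnm
  rw [heq] at h0
  have h1 : (∫ y : Metric.sphere (0 : EuclideanSpace ℝ (Fin d)) 1,
      evalP (f * g) y ∂(sphereMeas d)) = 0 :=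
    (mul_eq_zero.mp h0).resolve_left hc.ne'
  rw [← h1]
  exact integral_congr_ae (Filter.Eventually.of_forall fun y => (evalP_mul f g y).symm)

lemma evalP_one_sub_normSq (Q : MvPolynomial (Fin d) ℝ)
    (y : Metric.sphere (0 : EuclideanSpace ℝ (Fin d)) 1) :
    evalP ((1 - normSq d) * Q) (y : EuclideanSpace ℝ (Fin d)) = 0 := by
  rw [evalP_mul]
  have h1 : evalP (1 - normSq d) (y : EuclideanSpace ℝ (Fin d)) = 0 := by
    unfold evalP normSq
    rw [map_sub, map_one, map_sum]
    have h2 : (∑ i, (MvPolynomial.eval fun j => (y : EuclideanSpace ℝ (Fin d)) j)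
        ((X i : MvPolynomial (Fin d) ℝ) ^ 2))
        = ∑ i, ((y : EuclideanSpace ℝ (Fin d)) i) ^ 2 := by
      refine Finset.sum_congr rfl fun i _ => ?_
      rw [map_pow, eval_X]
    rw [h2, ← norm_sq_eq_sum, mem_sphere_zero_iff_norm.mp y.2]
    norm_num
  rw [h1, zero_mul]

lemma ball_zero_left {P : MvPolynomial (Fin d) ℝ} (g : MvPolynomial (Fin d) ℝ)
    (h : lap P = 0) :
    (∫ x in ballD d, evalP (lap P) x * evalP (lap g) x) = 0 := by
  rw [h]
  simp [evalP]

lemma ball_zero_right (P : MvPolynomial (Fin d) ℝ) {g : MvPolynomial (Fin d) ℝ}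
    (h : lap g = 0) :
    (∫ x in ballD d, evalP (lap P) x * evalP (lap g) x) = 0 := by
  rw [h]
  simp [evalP]

lemma sphere_zero_right (P Q : MvPolynomial (Fin d) ℝ) :
    (∫ y : Metric.sphere (0 : EuclideanSpace ℝ (Fin d)) 1,
      evalP P y * evalP ((1 - normSq d) * Q) y ∂(sphereMeas d)) = 0 := by
  have : (fun y : Metric.sphere (0 : EuclideanSpace ℝ (Fin d)) 1 =>
      evalP P y * evalP ((1 - normSq d) * Q) y) = fun _ => (0 : ℝ) := by
    funext y
    rw [evalP_one_sub_normSq, mul_zero]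
  rw [this]
  exact integral_zero _ _

lemma sphere_zero_left (Q P : MvPolynomial (Fin d) ℝ) :
    (∫ y : Metric.sphere (0 : EuclideanSpace ℝ (Fin d)) 1,
      evalP ((1 - normSq d) * Q) y * evalP P y ∂(sphereMeas d)) = 0 := by
  have : (fun y : Metric.sphere (0 : EuclideanSpace ℝ (Fin d)) 1 =>
      evalP ((1 - normSq d) * Q) y * evalP P y) = fun _ => (0 : ℝ) := by
    funext y
    rw [evalP_one_sub_normSq, zero_mul]
  rw [this]
  exact integral_zero _ _

lemma volB_pos : 0 < volB d := by
  unfold volB ballD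
  refine ENNReal.toReal_pos (ne_of_gt ?_) measure_closedBall_lt_top.ne
  exact Metric.measure_closedBall_pos _ _ one_pos

lemma innerDelta_ball (hd : 1 ≤ d) {Q h : MvPolynomial (Fin d) ℝ}
    (horth : innerDelta d Q h = 0) :
    (∫ x in ballD d,
      evalP (lap ((1 - normSq d) * Q)) x * evalP (lap ((1 - normSq d) * h)) x) = 0 := by
  unfold innerDelta at horth
  have hco : (1 / (4 * (d : ℝ) ^ 2 * volB d)) ≠ 0 := by
    apply one_div_ne_zero
    have h1 : (0 : ℝ) < (d : ℝ) ^ 2 := by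
      have : (0 : ℝ) < (d : ℝ) := by exact_mod_cast Nat.lt_of_lt_of_le Nat.zero_lt_one hd
      positivity
    have := volB_pos (d := d)
    positivity
  exact (mul_eq_zero.mp horth).resolve_left hco

end Assemble

end Aux

/-- elements of `V_n^d(W_{−2}) = H_n^d ⊕ (1−‖x‖²)V_{n−2}^d(Δ)` are
orthogonal with respect to `⟨·,·⟩_{−2}` to the elements of `V_m^d(W_{−2})` for `m < n`,
and the two components of degree `n` are mutually orthogonal. -/
theorem stmt14 (d : ℕ) (hd : 1 ≤ d) (lam : ℝ) (hlam : 0 < lam) (n m : ℕ) (hmn : m < n) :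
    (∀ P g : MvPolynomial (Fin d) ℝ,
      ((P.IsHomogeneous n ∧ lap P = 0) ∨
        (∃ Q : MvPolynomial (Fin d) ℝ, P = (1 - normSq d) * Q ∧ Q.totalDegree + 2 = n ∧
          ∀ h : MvPolynomial (Fin d) ℝ, h.totalDegree + 2 < n → innerDelta d Q h = 0)) →
      ((g.IsHomogeneous m ∧ lap g = 0) ∨
        (∃ h : MvPolynomial (Fin d) ℝ, g = (1 - normSq d) * h ∧ h.totalDegree + 2 = m ∧
          ∀ u : MvPolynomial (Fin d) ℝ, u.totalDegree + 2 < m → innerDelta d h u = 0)) →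
      innerNeg2 d lam P g = 0) ∧
    (∀ Y Q : MvPolynomial (Fin d) ℝ, Y.IsHomogeneous n → lap Y = 0 →
      Q.totalDegree + 2 = n →
      (∀ h : MvPolynomial (Fin d) ℝ, h.totalDegree + 2 < n → innerDelta d Q h = 0) →
      innerNeg2 d lam Y ((1 - normSq d) * Q) = 0) := by
  constructor
  · intro P g hP hg
    unfold innerNeg2
    rcases hP with ⟨hPhom, hPlap⟩ | ⟨Q, rfl, hQdeg, hQorth⟩
    · rcases hg with ⟨hghom, hglap⟩ | ⟨h, rfl, hhdeg, hhorth⟩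
      · rw [sphere_orth hd hPhom hghom hPlap hglap hmn.ne']
        simp only [mul_zero, add_zero]
        rw [ball_zero_left g hPlap]
        ring
      · rw [sphere_zero_right P h]
        simp only [mul_zero, add_zero]
        rw [ball_zero_left _ hPlap]
        ring
    · rcases hg with ⟨hghom, hglap⟩ | ⟨h, rfl, hhdeg, hhorth⟩
      · rw [sphere_zero_left Q g]
        simp only [mul_zero, add_zero]
        rw [ball_zero_right _ hglap]
        ring
      · rw [sphere_zero_left Q _]
        simp only [mul_zero, add_zero]
        rw [innerDelta_ball hd (hQorth h (by omega))]
        ring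
  · intro Y Q hYhom hYlap hQdeg hQorth
    unfold innerNeg2
    rw [sphere_zero_right Y Q]
    simp only [mul_zero, add_zero]
    rw [ball_zero_left _ hYlap]
    ring
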